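/- Let N ≥ 1, γ ∈ [0,1), and let 𝟙 ∈ ℝ^N be the all-ones vector. Then there exist row-stochastic matrices P₁, P₂ : Matrix (Fin N) (Fin N) ℝ such that { r ∈ ℝ^N : every entry of (P₁ − P₂) *ᵥ ((I − γ·P₁)⁻¹ *ᵥ r) is nonnegative } = { λ·𝟙 : λ ∈ ℝ }, the set of constant vectors. -/

import Mathlib

open Matrix
open Fin.NatCast

/-- **Theorem 2, matrix core, constant-reward case.** For `γ ∈ [0,1)`
there exist row-stochastic matrices `P₁, P₂` on `ℝ^N` such that the set of feasible
reward vectors is exactly the set of constant vectors `{λ • 𝟙 : λ ∈ ℝ}`. -/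
theorem exists_kernels_feasible_set_eq_constants
    (N : ℕ) (hN : 1 ≤ N) (γ : ℝ) (hγ0 : 0 ≤ γ) (hγ1 : γ < 1) :
    ∃ P₁ P₂ : Matrix (Fin N) (Fin N) ℝ,
      ((∀ i j, 0 ≤ P₁ i j) ∧ ∀ i, ∑ j, P₁ i j = 1) ∧
      ((∀ i j, 0 ≤ P₂ i j) ∧ ∀ i, ∑ j, P₂ i j = 1) ∧
      {r : Fin N → ℝ | ∀ s, 0 ≤ ((P₁ - P₂) *ᵥ ((1 - γ • P₁)⁻¹ *ᵥ r)) s} =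
        {r : Fin N → ℝ | ∃ l : ℝ, r = l • (1 : Fin N → ℝ)} := by
  haveI : NeZero N := ⟨by omega⟩
  -- P₁ is the cyclic-shift permutation matrix, P₂ the identity
  set P₁ : Matrix (Fin N) (Fin N) ℝ := Matrix.of fun i j => if j = i + 1 then 1 else 0 with hP₁
  refine ⟨P₁, 1, ⟨fun i j => by dsimp [P₁]; positivity, fun i => by
      simp [P₁, Finset.sum_ite_eq']⟩,
    ⟨fun i j => by simp [Matrix.one_apply]; positivity, fun i => by
      simp [Matrix.one_apply, Finset.sum_ite_eq']⟩, ?_⟩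
  set A : Matrix (Fin N) (Fin N) ℝ := 1 - γ • P₁ with hA
  -- basic computation of P₁ *ᵥ v
  have hmul : ∀ (v : Fin N → ℝ) s, (P₁ *ᵥ v) s = v (s + 1) := by
    intro v s
    simp [P₁, Matrix.mulVec, dotProduct, ite_mul, Finset.sum_ite_eq']
  have hAv : ∀ (v : Fin N → ℝ) s, (A *ᵥ v) s = v s - γ * v (s + 1) := by
    intro v s
    simp [hA, Matrix.sub_mulVec, Matrix.smul_mulVec, Matrix.one_mulVec, hmul]
  -- injectivity of A *ᵥ ·
  have hγN : γ ^ N < 1 := by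
    calc γ ^ N ≤ γ ^ 1 := pow_le_pow_of_le_one hγ0 hγ1.le hN
    _ = γ := pow_one γ
    _ < 1 := hγ1
  have hker : ∀ u : Fin N → ℝ, A *ᵥ u = 0 → u = 0 := by
    intro u hu
    have hstep : ∀ s : Fin N, u s = γ * u (s + 1) := by
      intro s
      have := congrFun hu s
      rw [hAv] at this
      simp only [Pi.zero_apply] at this
      linarith
    have hiter : ∀ (k : ℕ) (s : Fin N), u s = γ ^ k * u (s + (k : Fin N)) := by
      intro k
      induction k with
      | zero => intro s; simp
      | succ n ih =>
        intro s
        have h1 : u s = γ * u (s + 1) := hstep s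
        have h2 : u (s + 1) = γ ^ n * u ((s + 1) + (n : Fin N)) := ih (s + 1)
        rw [h1, h2]
        have : (s + 1) + (n : Fin N) = s + ((n : ℕ) + 1 : ℕ) := by
          push_cast
          abel
        rw [this]
        ring
    funext s
    have := hiter N s
    rw [Fin.natCast_self] at this
    simp only [add_zero] at this
    have hz : (1 - γ ^ N) * u s = 0 := by linarith
    have : u s = 0 := by
      rcases mul_eq_zero.mp hz with h | h
      · linarith
      · exact h
    simpa using this
  have hinj : Function.Injective (A.mulVec) := by
    intro x y hxy
    have : A *ᵥ (x - y) = 0 := by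
      rw [Matrix.mulVec_sub, hxy, sub_self]
    have := hker _ this
    have := sub_eq_zero.mp this
    exact this
  have hunit : IsUnit A := Matrix.mulVec_injective_iff_isUnit.mp hinj
  have hdet : IsUnit A.det := (Matrix.isUnit_iff_isUnit_det A).mp hunit
  have hAinv : ∀ r : Fin N → ℝ, A *ᵥ (A⁻¹ *ᵥ r) = r := by
    intro r
    rw [Matrix.mulVec_mulVec, Matrix.mul_nonsing_inv A hdet, Matrix.one_mulVec]
  -- A applied to constant vectors
  have hγ1' : (1 : ℝ) - γ ≠ 0 := by linarith
  have hAconst : ∀ c : ℝ, A *ᵥ (c • (1 : Fin N → ℝ)) = (c * (1 - γ)) • (1 : Fin N → ℝ) := by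
    intro c
    funext s
    rw [hAv]
    simp [Pi.smul_apply]
    ring
  ext r
  simp only [Set.mem_setOf_eq]
  set v : Fin N → ℝ := A⁻¹ *ᵥ r with hv
  have hcond : ∀ s, ((P₁ - 1) *ᵥ v) s = v (s + 1) - v s := by
    intro s
    simp [Matrix.sub_mulVec, Matrix.one_mulVec, hmul]
  constructor
  · intro h
    -- v is cyclically monotone hence constant
    have hmono : ∀ s : Fin N, v s ≤ v (s + 1) := by
      intro s
      have := h s
      rw [hcond] at this
      linarith
    set g : ℕ → ℝ := fun k => v ((k : ℕ) : Fin N) with hg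
    have hgmono : Monotone g := by
      apply monotone_nat_of_le_succ
      intro n
      have := hmono ((n : ℕ) : Fin N)
      simpa [hg, Nat.cast_add, Nat.cast_one] using this
    have hgN : g N = g 0 := by simp [hg, Fin.natCast_self]
    have hconst : ∀ s : Fin N, v s = v 0 := by
      intro s
      have h1 : g 0 ≤ g s.val := hgmono (Nat.zero_le _)
      have h2 : g s.val ≤ g N := hgmono s.isLt.le
      have : g s.val = g 0 := le_antisymm (hgN ▸ h2) h1
      simpa [hg, Fin.cast_val_eq_self] using this
    refine ⟨v 0 * (1 - γ), ?_⟩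
    have hvconst : v = (v 0) • (1 : Fin N → ℝ) := by
      funext s
      simp [hconst s]
    have := hAinv r
    rw [← hv] at this  -- no-op
    calc r = A *ᵥ v := (hAinv r).symm
    _ = A *ᵥ ((v 0) • (1 : Fin N → ℝ)) := by rw [← hvconst]
    _ = (v 0 * (1 - γ)) • (1 : Fin N → ℝ) := hAconst _
  · rintro ⟨l, rfl⟩
    have hveq : v = (l / (1 - γ)) • (1 : Fin N → ℝ) := by
      apply hinj
      rw [hAinv, hAconst]
      congr 1
      field_simp
    intro s
    rw [hcond, hveq]
    simp
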